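/- Let C = {C_1,...,C_t} be a characteristic set of a parametric system P in K[U][X], i.e., C ⊂ ⟨P⟩_{K[U][X]} and the successive pseudo-remainder prem(p, C) = 0 for all p ∈ P. Then for any a ∈ K̄^d, V(P(a)) = V(C(a) \ I_C(a)) ∪ ⋃_{i=1}^t V(P(a) ∪ C(a) ∪ {I_{C_i}(a)}), where I_C = ∏_{i=1}^t I_{C_i} and V(S \ g) denotes V(S) minus V(g). -/

import Mathlib

open MvPolynomial

noncomputable section

variable {K : Type*} [Field K] {d n : ℕ}

/-- Specialization of parameters: `K[U][X] → K̄[X]` substituting `a` for `U`. -/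
def specAt (a : Fin d → AlgebraicClosure K) :
    MvPolynomial (Fin n) (MvPolynomial (Fin d) K) →+*
      MvPolynomial (Fin n) (AlgebraicClosure K) :=
  MvPolynomial.map ((MvPolynomial.aeval a).toRingHom)

/-- Common zero set in `K̄ⁿ` of the specializations at `a` of a set of polynomials. -/
def zeroSetAt (a : Fin d → AlgebraicClosure K)
    (S : Set (MvPolynomial (Fin n) (MvPolynomial (Fin d) K))) :
    Set (Fin n → AlgebraicClosure K) :=
  {x | ∀ f ∈ S, MvPolynomial.eval x (specAt a f) = 0}

variable {A : Type*} [CommRing A]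

/-- The main (largest) variable of a multivariate polynomial (defaults to `0`). -/
def mainVar [NeZero n] (F : MvPolynomial (Fin n) A) : Fin n := WithBot.unbotD 0 F.vars.max

/-- The initial of `F`: its leading coefficient w.r.t. its main variable. -/
def initial [NeZero n] (F : MvPolynomial (Fin n) A) : MvPolynomial (Fin n) A :=
  ∑ m ∈ F.support.filter (fun m => m (mainVar F) = F.degreeOf (mainVar F)),
    MvPolynomial.monomial (m - Finsupp.single (mainVar F) (F.degreeOf (mainVar F))) (F.coeff m)

/-- `F` viewed as a univariate polynomial in the variable `j`. -/
def toUniv (j : Fin n) (F : MvPolynomial (Fin n) A) :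
    Polynomial (MvPolynomial (Fin n) A) :=
  ∑ m ∈ F.support,
    Polynomial.monomial (m j) (MvPolynomial.monomial (m - Finsupp.single j (m j)) (F.coeff m))

/-- The Sylvester matrix of two univariate polynomials. -/
def sylvester (f g : Polynomial A) :
    Matrix (Fin (f.natDegree + g.natDegree)) (Fin (f.natDegree + g.natDegree)) A :=
  fun i j =>
    if (i : ℕ) < g.natDegree then
      (if (i : ℕ) ≤ (j : ℕ) ∧ (j : ℕ) ≤ (i : ℕ) + f.natDegree then
        f.coeff (f.natDegree + i - j) else 0)
    else
      (if (i : ℕ) - g.natDegree ≤ (j : ℕ) ∧ (j : ℕ) ≤ ((i : ℕ) - g.natDegree) + g.natDegree then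
        g.coeff (g.natDegree + ((i : ℕ) - g.natDegree) - j) else 0)

/-- The resultant of two univariate polynomials (Sylvester determinant). -/
def resultant (f g : Polynomial A) : A := (sylvester f g).det

/-- `res(F, P)`: resultant w.r.t. the main variable of `P`. -/
def res1 [NeZero n] (F P : MvPolynomial (Fin n) A) : MvPolynomial (Fin n) A :=
  resultant (toUniv (mainVar P) F) (toUniv (mainVar P) P)

/-- Successive resultant of `F` w.r.t. the list `l` of polynomials. -/
def sres [NeZero n] (F : MvPolynomial (Fin n) A) (l : List (MvPolynomial (Fin n) A)) :
    MvPolynomial (Fin n) A :=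
  l.foldl res1 F

/-- A triangular set: the main variables are strictly increasing. -/
def IsTriangular [NeZero n] {r : ℕ} (T : Fin r → MvPolynomial (Fin n) A) : Prop :=
  (∀ i, (T i).vars.Nonempty) ∧ StrictMono (fun i => mainVar (T i))

/-- A regular chain. -/
def IsRegularChain [NeZero n] {r : ℕ} (T : Fin r → MvPolynomial (Fin n) A) : Prop :=
  IsTriangular T ∧ (∀ i : Fin r, (i : ℕ) = 0 → initial (T i) ≠ 0) ∧
    ∀ i : Fin r, 0 < (i : ℕ) →
      sres (initial (T i)) ((List.ofFn T).take i).reverse ≠ 0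
/-- Lemma wuset: If `C = {C_1,...,C_t}` is a characteristic set of `P` (i.e.
`C ⊆ ⟨P⟩` and every `p ∈ P` pseudo-reduces to zero modulo `C`), then for every `a ∈ K̄^d`,
`V(P(a)) = (V(C(a)) \ V(I_C(a))) ∪ ⋃_i V(P(a) ∪ C(a) ∪ {I_{C_i}(a)})`. -/
theorem stmt3 [NeZero n] {t : ℕ}
    (P : Set (MvPolynomial (Fin n) (MvPolynomial (Fin d) K))) (hPfin : P.Finite)
    (C : Fin t → MvPolynomial (Fin n) (MvPolynomial (Fin d) K))
    (hTri : IsTriangular C)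
    (hCP : ∀ i, C i ∈ Ideal.span P)
    (hprem : ∀ p ∈ P, ∃ k : Fin t → ℕ,
      (∏ i, initial (C i) ^ k i) * p ∈ Ideal.span (Set.range C)) :
    ∀ a : Fin d → AlgebraicClosure K,
      zeroSetAt a P =
        (zeroSetAt a (Set.range C) \ zeroSetAt a {∏ i, initial (C i)}) ∪
          ⋃ i, zeroSetAt a (P ∪ Set.range C ∪ {initial (C i)}) := by
  intro a
  set φ : (Fin n → AlgebraicClosure K) →
      (MvPolynomial (Fin n) (MvPolynomial (Fin d) K) →+* AlgebraicClosure K) :=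
    fun x => (MvPolynomial.eval x).comp (specAt a) with hφ
  have key : ∀ (x : Fin n → AlgebraicClosure K)
      (S : Set (MvPolynomial (Fin n) (MvPolynomial (Fin d) K)))
      (f : MvPolynomial (Fin n) (MvPolynomial (Fin d) K)),
      f ∈ Ideal.span S → (∀ g ∈ S, MvPolynomial.eval x (specAt a g) = 0) →
      MvPolynomial.eval x (specAt a f) = 0 := by
    intro x S f hf hS
    have : ∀ g, MvPolynomial.eval x (specAt a g) = φ x g := fun _ => rfl
    rw [this]
    refine Submodule.span_induction (p := fun f _ => φ x f = 0) ?_ ?_ ?_ ?_ hf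
    · exact fun g hg => hS g hg
    · simp
    · intro u v _ _ hu hv; simp [map_add, hu, hv]
    · intro r u _ hu; simp [smul_eq_mul, map_mul, hu]
  ext x
  constructor
  · intro hx
    have hC : ∀ i, MvPolynomial.eval x (specAt a (C i)) = 0 := fun i =>
      key x P (C i) (hCP i) hx
    by_cases hI : MvPolynomial.eval x (specAt a (∏ i, initial (C i))) = 0
    · -- some initial vanishes
      rw [map_prod, map_prod] at hI
      obtain ⟨i, -, hi⟩ := Finset.prod_eq_zero_iff.mp hI
      right
      refine Set.mem_iUnion.mpr ⟨i, fun f hf => ?_⟩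
      rcases hf with (hf | ⟨j, rfl⟩) | hf
      · exact hx f hf
      · exact hC j
      · simp only [Set.mem_singleton_iff] at hf; subst hf; exact hi
    · left
      refine ⟨fun f hf => ?_, fun h => hI (h _ rfl)⟩
      obtain ⟨i, rfl⟩ := hf
      exact hC i
  · rintro (⟨hC, hI⟩ | hU)
    · intro p hp
      obtain ⟨k, hk⟩ := hprem p hp
      have h0 : MvPolynomial.eval x (specAt a ((∏ i, initial (C i) ^ k i) * p)) = 0 :=
        key x (Set.range C) _ hk (fun g hg => hC g hg)
      rw [map_mul, map_mul, map_prod, map_prod] at h0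
      rcases mul_eq_zero.mp h0 with h | h
      · exfalso
        apply hI
        intro f hf
        rcases Finset.prod_eq_zero_iff.mp h with ⟨i, _, hi⟩
        rw [map_pow, map_pow] at hi
        have : MvPolynomial.eval x (specAt a (initial (C i))) = 0 :=
          (pow_eq_zero_iff'.mp hi).1
        simp only [Set.mem_singleton_iff] at hf
        subst hf
        rw [map_prod, map_prod]
        exact Finset.prod_eq_zero (Finset.mem_univ i) this
      · exact h
    · obtain ⟨s, ⟨i, rfl⟩, hs⟩ := hU
      exact fun p hp => hs p (Or.inl (Or.inl hp))

end
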